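/- Let (S, μ) be a σ-finite measure space, F ∈ L¹(S², μ²), and let f₁, f₂ : S → [0,∞) be bounded measurable functions. Then the cut norm of the function (x,y) ↦ f₁(x) f₂(y) F(x,y) is at most ‖f₁‖_∞ · ‖f₂‖_∞ · ‖F‖_□. -/

import Mathlib

open MeasureTheory Filter Topology

noncomputable def cutNorm {S : Type*} [MeasurableSpace S] (μ : Measure S)
    (F : S × S → ℝ) : ℝ :=
  ⨆ TU : {TU : Set S × Set S // MeasurableSet TU.1 ∧ MeasurableSet TU.2},
    |∫ p in TU.1.1 ×ˢ TU.1.2, F p ∂(μ.prod μ)|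

section aux

variable {S : Type*} [MeasurableSpace S] (μ : Measure S)

lemma cutNorm_bddAbove {F : S × S → ℝ} (hF : Integrable F (μ.prod μ)) :
    BddAbove (Set.range fun TU : {TU : Set S × Set S // MeasurableSet TU.1 ∧ MeasurableSet TU.2} =>
      |∫ p in TU.1.1 ×ˢ TU.1.2, F p ∂(μ.prod μ)|) := by
  refine ⟨∫ p, ‖F p‖ ∂(μ.prod μ), ?_⟩
  rintro x ⟨TU, rfl⟩
  calc |∫ p in TU.1.1 ×ˢ TU.1.2, F p ∂(μ.prod μ)|
      ≤ ∫ p in TU.1.1 ×ˢ TU.1.2, ‖F p‖ ∂(μ.prod μ) := by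
        simpa using norm_integral_le_integral_norm (μ := (μ.prod μ).restrict _) F
    _ ≤ ∫ p, ‖F p‖ ∂(μ.prod μ) :=
        setIntegral_le_integral hF.norm (Eventually.of_forall fun _ => norm_nonneg _)

lemma abs_setIntegral_le_cutNorm {F : S × S → ℝ} (hF : Integrable F (μ.prod μ))
    {T U : Set S} (hT : MeasurableSet T) (hU : MeasurableSet U) :
    |∫ p in T ×ˢ U, F p ∂(μ.prod μ)| ≤ cutNorm μ F :=
  le_ciSup (cutNorm_bddAbove μ hF) ⟨(T, U), hT, hU⟩

variable [SigmaFinite μ]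

lemma integral_mul_le_cutNorm {F : S × S → ℝ} (hF : Integrable F (μ.prod μ))
    {g h : S → ℝ} (hg : Measurable g) (hh : Measurable h)
    (hg01 : ∀ x, g x ∈ Set.Icc (0:ℝ) 1) (hh01 : ∀ x, h x ∈ Set.Icc (0:ℝ) 1) :
    ∫ p, g p.1 * h p.2 * F p ∂(μ.prod μ) ≤ cutNorm μ F := by
  have hφ : Integrable (fun p : S × S => h p.2 * F p) (μ.prod μ) :=
    hF.bdd_mul (hh.comp measurable_snd).aestronglyMeasurable
      (c := 1) (Eventually.of_forall fun p => by simpa [Real.norm_eq_abs, abs_of_nonneg (hh01 p.2).1] using (hh01 p.2).2)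
  have hgφ : Integrable (fun p : S × S => g p.1 * (h p.2 * F p)) (μ.prod μ) :=
    hφ.bdd_mul (hg.comp measurable_fst).aestronglyMeasurable
      (c := 1) (Eventually.of_forall fun p => by simpa [Real.norm_eq_abs, abs_of_nonneg (hg01 p.1).1] using (hg01 p.1).2)
  set G : S → ℝ := fun x => ∫ y, h y * F (x, y) ∂μ with hGdef
  have hGint : Integrable G μ := hφ.integral_prod_left
  set G' : S → ℝ := hGint.1.mk G with hG'def
  set T : Set S := {x | 0 < G' x} with hTdef
  have hT : MeasurableSet T :=
    measurableSet_lt measurable_const hGint.1.stronglyMeasurable_mk.measurable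
  have stepA : ∫ p, g p.1 * h p.2 * F p ∂(μ.prod μ) = ∫ x, g x * G x ∂μ := by
    simp_rw [mul_assoc]
    rw [integral_prod _ hgφ]
    simp_rw [integral_const_mul]; rfl
  have hgG : Integrable (fun x => g x * G x) μ :=
    hGint.bdd_mul hg.aestronglyMeasurable
      (c := 1) (Eventually.of_forall fun x => by simpa [Real.norm_eq_abs, abs_of_nonneg (hg01 x).1] using (hg01 x).2)
  have hmono : ∫ x, g x * G x ∂μ ≤ ∫ x, T.indicator G x ∂μ := by
    refine integral_mono_ae hgG (hGint.indicator hT) ?_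
    filter_upwards [hGint.1.ae_eq_mk] with x hx
    by_cases hxT : x ∈ T
    · rw [Set.indicator_of_mem hxT]
      have hGpos : 0 < G x := hx ▸ hxT
      nlinarith [mul_nonneg (sub_nonneg.2 (hg01 x).2) hGpos.le]
    · rw [Set.indicator_of_notMem hxT]
      have hGnp : G x ≤ 0 := hx ▸ (not_lt.1 hxT)
      nlinarith [mul_nonneg (hg01 x).1 (neg_nonneg.mpr hGnp)]
  -- pass to the second variable
  set H : S → ℝ := fun y => ∫ x in T, F (x, y) ∂μ with hHdef
  have hFT : Integrable F ((μ.restrict T).prod μ) := by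
    rw [Measure.restrict_prod_eq_prod_univ]
    exact hF.restrict
  have hHint : Integrable H μ := hFT.integral_prod_right
  have hφT : Integrable (Function.uncurry fun x y => h y * F (x, y))
      ((μ.restrict T).prod μ) := by
    have : (Function.uncurry fun x y => h y * F (x, y)) = fun p : S × S => h p.2 * F p := by
      funext p; simp [Function.uncurry]
    rw [this, Measure.restrict_prod_eq_prod_univ]
    exact hφ.restrict
  have stepB : ∫ x, T.indicator G x ∂μ = ∫ y, h y * H y ∂μ := by
    rw [integral_indicator hT]
    calc ∫ x in T, G x ∂μ = ∫ y, ∫ x in T, h y * F (x, y) ∂μ ∂μ :=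
          integral_integral_swap hφT
      _ = ∫ y, h y * H y ∂μ := by simp_rw [integral_const_mul]; rfl
  have hhH : Integrable (fun y => h y * H y) μ :=
    hHint.bdd_mul hh.aestronglyMeasurable
      (c := 1) (Eventually.of_forall fun x => by simpa [Real.norm_eq_abs, abs_of_nonneg (hh01 x).1] using (hh01 x).2)
  set H' : S → ℝ := hHint.1.mk H with hH'def
  set U : Set S := {y | 0 < H' y} with hUdef
  have hU : MeasurableSet U :=
    measurableSet_lt measurable_const hHint.1.stronglyMeasurable_mk.measurable
  have hmono2 : ∫ y, h y * H y ∂μ ≤ ∫ y, U.indicator H y ∂μ := by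
    refine integral_mono_ae hhH (hHint.indicator hU) ?_
    filter_upwards [hHint.1.ae_eq_mk] with y hy
    by_cases hyU : y ∈ U
    · rw [Set.indicator_of_mem hyU]
      have hHpos : 0 < H y := hy ▸ hyU
      nlinarith [mul_nonneg (sub_nonneg.2 (hh01 y).2) hHpos.le]
    · rw [Set.indicator_of_notMem hyU]
      have hHnp : H y ≤ 0 := hy ▸ (not_lt.1 hyU)
      nlinarith [mul_nonneg (hh01 y).1 (neg_nonneg.mpr hHnp)]
  have hFTU : Integrable F ((μ.restrict T).prod (μ.restrict U)) := by
    rw [Measure.prod_restrict]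
    exact hF.restrict
  have hFUT : Integrable (Function.uncurry fun y x => F (x, y))
      ((μ.restrict U).prod (μ.restrict T)) := by
    have : (Function.uncurry fun y x => F (x, y)) = F ∘ Prod.swap := by
      funext p; rfl
    rw [this]
    exact hFTU.swap
  have stepC : ∫ y, U.indicator H y ∂μ = ∫ p in T ×ˢ U, F p ∂(μ.prod μ) := by
    rw [integral_indicator hU]
    calc ∫ y in U, H y ∂μ = ∫ x in T, ∫ y in U, F (x, y) ∂μ ∂μ :=
          integral_integral_swap hFUT
      _ = ∫ p, F p ∂((μ.restrict T).prod (μ.restrict U)) := (integral_prod _ hFTU).symm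
      _ = ∫ p in T ×ˢ U, F p ∂(μ.prod μ) := by rw [Measure.prod_restrict]
  calc ∫ p, g p.1 * h p.2 * F p ∂(μ.prod μ) ≤ ∫ y, U.indicator H y ∂μ := by
        rw [stepA]; exact hmono.trans (stepB ▸ hmono2)
    _ = ∫ p in T ×ˢ U, F p ∂(μ.prod μ) := stepC
    _ ≤ |∫ p in T ×ˢ U, F p ∂(μ.prod μ)| := le_abs_self _
    _ ≤ cutNorm μ F := abs_setIntegral_le_cutNorm μ hF hT hU

lemma abs_integral_mul_le_cutNorm {F : S × S → ℝ} (hF : Integrable F (μ.prod μ))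
    {g h : S → ℝ} (hg : Measurable g) (hh : Measurable h)
    (hg01 : ∀ x, g x ∈ Set.Icc (0:ℝ) 1) (hh01 : ∀ x, h x ∈ Set.Icc (0:ℝ) 1) :
    |∫ p, g p.1 * h p.2 * F p ∂(μ.prod μ)| ≤ cutNorm μ F := by
  rw [abs_le]
  refine ⟨?_, integral_mul_le_cutNorm μ hF hg hh hg01 hh01⟩
  have hneg := integral_mul_le_cutNorm μ (F := fun p => -F p) hF.neg hg hh hg01 hh01
  have hcn : cutNorm μ (fun p => -F p) = cutNorm μ F := by
    unfold cutNorm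
    congr 1
    funext TU
    rw [integral_neg, abs_neg]
  rw [hcn] at hneg
  have : ∫ p, g p.1 * h p.2 * -F p ∂(μ.prod μ) = -∫ p, g p.1 * h p.2 * F p ∂(μ.prod μ) := by
    rw [← integral_neg]
    simp [mul_neg]
  linarith [hneg, this ▸ hneg]

end aux

theorem cutNorm_mul_le {S : Type*} [MeasurableSpace S] (μ : Measure S) [SigmaFinite μ]
    (F : S × S → ℝ) (hF : Integrable F (μ.prod μ))
    (f₁ f₂ : S → ℝ) (hf₁ : Measurable f₁) (hf₂ : Measurable f₂)
    (C₁ C₂ : ℝ)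
    (hb₁ : ∀ x, f₁ x ∈ Set.Icc 0 C₁) (hb₂ : ∀ x, f₂ x ∈ Set.Icc 0 C₂) :
    cutNorm μ (fun p => f₁ p.1 * f₂ p.2 * F p) ≤ C₁ * C₂ * cutNorm μ F := by
  haveI : Nonempty {TU : Set S × Set S // MeasurableSet TU.1 ∧ MeasurableSet TU.2} :=
    ⟨⟨(∅, ∅), MeasurableSet.empty, MeasurableSet.empty⟩⟩
  have hcnF_nonneg : 0 ≤ cutNorm μ F :=
    Real.iSup_nonneg fun _ => abs_nonneg _
  cases isEmpty_or_nonempty S with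
  | inl hemp =>
    have hμ : μ = 0 := μ.eq_zero_of_isEmpty
    simp [cutNorm, hμ]
  | inr hne =>
    obtain ⟨x₀⟩ := hne
    have hC₁ : 0 ≤ C₁ := (hb₁ x₀).1.trans (hb₁ x₀).2
    have hC₂ : 0 ≤ C₂ := (hb₂ x₀).1.trans (hb₂ x₀).2
    unfold cutNorm
    refine ciSup_le ?_
    rintro ⟨⟨T, U⟩, hT, hU⟩
    simp only
    rcases hC₁.eq_or_lt with rfl | hC₁pos
    · have hz : ∀ x, f₁ x = 0 := fun x => le_antisymm (hb₁ x).2 (hb₁ x).1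
      simp [hz, hcnF_nonneg]
    rcases hC₂.eq_or_lt with rfl | hC₂pos
    · have hz : ∀ x, f₂ x = 0 := fun x => le_antisymm (hb₂ x).2 (hb₂ x).1
      simp [hz, hcnF_nonneg]
    set g : S → ℝ := fun x => T.indicator f₁ x / C₁ with hgdef
    set h : S → ℝ := fun y => U.indicator f₂ y / C₂ with hhdef
    have hg : Measurable g := (hf₁.indicator hT).div_const _
    have hh : Measurable h := (hf₂.indicator hU).div_const _
    have hg01 : ∀ x, g x ∈ Set.Icc (0:ℝ) 1 := by
      intro x
      constructor
      · exact div_nonneg (Set.indicator_nonneg (fun y _ => (hb₁ y).1) x) hC₁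
      · rw [div_le_one hC₁pos]
        by_cases hx : x ∈ T
        · simpa [Set.indicator_of_mem hx] using (hb₁ x).2
        · simp [Set.indicator_of_notMem hx, hC₁]
    have hh01 : ∀ x, h x ∈ Set.Icc (0:ℝ) 1 := by
      intro x
      constructor
      · exact div_nonneg (Set.indicator_nonneg (fun y _ => (hb₂ y).1) x) hC₂
      · rw [div_le_one hC₂pos]
        by_cases hx : x ∈ U
        · simpa [Set.indicator_of_mem hx] using (hb₂ x).2
        · simp [Set.indicator_of_notMem hx, hC₂]
    have hpt : ∀ p : S × S, (T ×ˢ U).indicator (fun p : S × S => f₁ p.1 * f₂ p.2 * F p) p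
        = C₁ * C₂ * (g p.1 * h p.2 * F p) := by
      rintro ⟨x, y⟩
      by_cases hx : x ∈ T <;> by_cases hy : y ∈ U <;>
        simp only [hgdef, hhdef, Set.indicator, Set.mem_prod, hx, hy, if_true, if_false,
          true_and, and_true, false_and, and_false] <;>
        field_simp <;> ring
    have hkey := abs_integral_mul_le_cutNorm μ hF hg hh hg01 hh01
    calc |∫ p in T ×ˢ U, f₁ p.1 * f₂ p.2 * F p ∂(μ.prod μ)|
        = |∫ p, (T ×ˢ U).indicator (fun p : S × S => f₁ p.1 * f₂ p.2 * F p) p ∂(μ.prod μ)| := by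
          rw [integral_indicator (hT.prod hU)]
      _ = |C₁ * C₂ * ∫ p, g p.1 * h p.2 * F p ∂(μ.prod μ)| := by
          rw [← integral_const_mul]
          exact congrArg _ (integral_congr_ae (Eventually.of_forall hpt))
      _ = C₁ * C₂ * |∫ p, g p.1 * h p.2 * F p ∂(μ.prod μ)| := by
          rw [abs_mul, abs_of_nonneg (mul_nonneg hC₁ hC₂)]
      _ ≤ C₁ * C₂ * cutNorm μ F :=
          mul_le_mul_of_nonneg_left hkey (mul_nonneg hC₁ hC₂)
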